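/- Assume ℓ < 1 and that M is compact. Then X_{0,1} ∩ p^{-1}(1/2) is a closed subset of p^{-1}(1/2) (indeed clopen in the subspace topology of p^{-1}(1/2)), and hence X_{0,1} ∩ p^{-1}(1/2) is a compact subset of M. -/

import Mathlib

open Filter Topology

/-- The set `X_{i,j}` of points whose `g`-value along the flow tends to `i`
as `t → -∞` and to `j` as `t → +∞`. -/
def Xset {M : Type*} (ψ : ℝ → M → M) (g : M → ℝ) (i j : ℝ) : Set M :=
  {x | Tendsto (fun t => g (ψ t x)) atBot (nhds i) ∧
       Tendsto (fun t => g (ψ t x)) atTop (nhds j)}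

/-- The Fuller average `g_n(x) = (1/(2n)) ∫_{-n}^{n} g(ψ_t(x)) dt`. -/
noncomputable def gAvg {M : Type*} (ψ : ℝ → M → M) (g : M → ℝ) (n : ℕ) (x : M) : ℝ :=
  (1 / (2 * (n : ℝ))) * ∫ t in (-(n : ℝ))..(n : ℝ), g (ψ t x)

/-- The function `p(x) = Σ_{n=1}^∞ 2^{-n} g_n(x)`. -/
noncomputable def pFun {M : Type*} (ψ : ℝ → M → M) (g : M → ℝ) (x : M) : ℝ :=
  ∑' n : ℕ, (1 / 2 : ℝ) ^ (n + 1) * gAvg ψ g (n + 1) x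

/-- The set `U_{0,0}` of points of `X_{0,0}` whose orbit is not entirely at `g`-value 0. -/
def U00 {M : Type*} (ψ : ℝ → M → M) (g : M → ℝ) : Set M :=
  {x ∈ Xset ψ g 0 0 | ∃ t : ℝ, g (ψ t x) ≠ 0}

/-- The set `U_{1,1}` of points of `X_{1,1}` whose orbit is not entirely at `g`-value 1. -/
def U11 {M : Type*} (ψ : ℝ → M → M) (g : M → ℝ) : Set M :=
  {x ∈ Xset ψ g 1 1 | ∃ t : ℝ, g (ψ t x) ≠ 1}

section AuxStmt15

set_option linter.unusedSectionVars false

variable {M : Type*} [TopologicalSpace M] {ψ : ℝ → M → M} {g : M → ℝ} {ℓ : ℝ}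

/-- The orbit map `t ↦ g (ψ t x)` is continuous. -/
lemma stmt15.orbitCont (hcont : Continuous fun q : ℝ × M => ψ q.1 q.2) (hg : Continuous g)
    (x : M) : Continuous fun t : ℝ => g (ψ t x) :=
  hg.comp (hcont.comp (continuous_id.prodMk continuous_const))

/-- A continuous real function taking only the values 0 and 1 on `(a, ∞)` is constant there. -/
lemma stmt15.const_right_of_01 {f : ℝ → ℝ} (hf : Continuous f) {a : ℝ}
    (hmem : ∀ t, a < t → f t = 0 ∨ f t = 1) :
    ∀ t₁ t₂, a < t₁ → a < t₂ → f t₁ = f t₂ := by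
  intro t₁ t₂ h₁ h₂
  by_contra hne
  have hhalf : (1 / 2 : ℝ) ∈ Set.uIcc (f t₁) (f t₂) := by
    rcases hmem t₁ h₁ with e1 | e1 <;> rcases hmem t₂ h₂ with e2 | e2 <;>
      first
        | exact absurd (e1.trans e2.symm) hne
        | (rw [e1, e2, Set.mem_uIcc]; norm_num)
  obtain ⟨c, hc, hfc⟩ := intermediate_value_uIcc (f := f) (a := t₁) (b := t₂)
    hf.continuousOn hhalf
  have hac : a < c := by
    rcases Set.mem_uIcc.1 hc with ⟨h, _⟩ | ⟨h, _⟩ <;> linarith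
  rcases hmem c hac with h | h <;> rw [hfc] at h <;> norm_num at h

/-- A continuous real function taking only the values 0 and 1 on `(-∞, a)` is constant there. -/
lemma stmt15.const_left_of_01 {f : ℝ → ℝ} (hf : Continuous f) {a : ℝ}
    (hmem : ∀ t, t < a → f t = 0 ∨ f t = 1) :
    ∀ t₁ t₂, t₁ < a → t₂ < a → f t₁ = f t₂ := by
  intro t₁ t₂ h₁ h₂
  by_contra hne
  have hhalf : (1 / 2 : ℝ) ∈ Set.uIcc (f t₁) (f t₂) := by
    rcases hmem t₁ h₁ with e1 | e1 <;> rcases hmem t₂ h₂ with e2 | e2 <;>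
      first
        | exact absurd (e1.trans e2.symm) hne
        | (rw [e1, e2, Set.mem_uIcc]; norm_num)
  obtain ⟨c, hc, hfc⟩ := intermediate_value_uIcc (f := f) (a := t₁) (b := t₂)
    hf.continuousOn hhalf
  have hac : c < a := by
    rcases Set.mem_uIcc.1 hc with ⟨_, h⟩ | ⟨_, h⟩ <;> linarith
  rcases hmem c hac with h | h <;> rw [hfc] at h <;> norm_num at h

lemma stmt15.tendsto_atTop_of_const {f : ℝ → ℝ} {a v : ℝ} (h : ∀ t, a < t → f t = v) :
    Tendsto f atTop (nhds v) := by
  refine Tendsto.congr' ?_ (tendsto_const_nhds (α := ℝ) (f := atTop))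
  filter_upwards [eventually_gt_atTop a] with t ht
  exact (h t ht).symm

lemma stmt15.tendsto_atBot_of_const {f : ℝ → ℝ} {a v : ℝ} (h : ∀ t, t < a → f t = v) :
    Tendsto f atBot (nhds v) := by
  refine Tendsto.congr' ?_ (tendsto_const_nhds (α := ℝ) (f := atBot))
  filter_upwards [eventually_lt_atBot a] with t ht
  exact (h t ht).symm

lemma stmt15.gAvg_mem (hcont : Continuous fun q : ℝ × M => ψ q.1 q.2) (hg : Continuous g)
    (hg01 : ∀ x, g x ∈ Set.Icc (0 : ℝ) 1) {n : ℕ} (hn : 1 ≤ n) (x : M) :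
    gAvg ψ g n x ∈ Set.Icc (0 : ℝ) 1 := by
  have hN : (1 : ℝ) ≤ (n : ℝ) := by exact_mod_cast hn
  have hI0 : 0 ≤ ∫ t in (-(n : ℝ))..(n : ℝ), g (ψ t x) :=
    intervalIntegral.integral_nonneg (by linarith) (fun t _ => (hg01 _).1)
  have hconst : (∫ _ in (-(n : ℝ))..(n : ℝ), (1 : ℝ)) = 2 * (n : ℝ) := by
    simp; ring
  have hI1 : (∫ t in (-(n : ℝ))..(n : ℝ), g (ψ t x)) ≤ 2 * (n : ℝ) := by
    rw [← hconst]
    exact intervalIntegral.integral_mono_on (by linarith)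
      ((stmt15.orbitCont hcont hg x).intervalIntegrable _ _) intervalIntegrable_const
      (fun t _ => (hg01 _).2)
  constructor
  · unfold gAvg; positivity
  · unfold gAvg
    calc (1 / (2 * (n : ℝ))) * ∫ t in (-(n : ℝ))..(n : ℝ), g (ψ t x)
        ≤ (1 / (2 * (n : ℝ))) * (2 * (n : ℝ)) :=
          mul_le_mul_of_nonneg_left hI1 (by positivity)
      _ = 1 := by field_simp

lemma stmt15.pFun_summable (hcont : Continuous fun q : ℝ × M => ψ q.1 q.2) (hg : Continuous g)
    (hg01 : ∀ x, g x ∈ Set.Icc (0 : ℝ) 1) (x : M) :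
    Summable fun n : ℕ => (1 / 2 : ℝ) ^ (n + 1) * gAvg ψ g (n + 1) x := by
  have hgeo : Summable fun n : ℕ => ((1 / 2 : ℝ)) ^ (n + 1) := by
    simpa [pow_succ] using summable_geometric_two.mul_right (1 / 2 : ℝ)
  refine Summable.of_nonneg_of_le (fun n => ?_) (fun n => ?_) hgeo
  · have := (stmt15.gAvg_mem hcont hg hg01 (n := n + 1) (by omega) x).1
    positivity
  · have h := (stmt15.gAvg_mem hcont hg hg01 (n := n + 1) (by omega) x).2
    nlinarith [pow_pos (by norm_num : (0:ℝ) < 1/2) (n+1)]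

lemma stmt15.tsum_halfgeo : ∑' n : ℕ, ((1 / 2 : ℝ)) ^ (n + 1) * (1 / 2) = 1 / 2 := by
  rw [tsum_mul_right]
  have : ∑' n : ℕ, ((1 / 2 : ℝ)) ^ (n + 1) = 1 := by
    simp_rw [pow_succ]
    rw [tsum_mul_right, tsum_geometric_two]
    norm_num
  rw [this]; norm_num

lemma stmt15.summable_halfgeo : Summable fun n : ℕ => ((1 / 2 : ℝ)) ^ (n + 1) * (1 / 2) := by
  have hgeo : Summable fun n : ℕ => ((1 / 2 : ℝ)) ^ (n + 1) := by
    simpa [pow_succ] using summable_geometric_two.mul_right (1 / 2 : ℝ)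
  exact hgeo.mul_right _

/-- If all averages are `> 1/2` then `p > 1/2`. -/
lemma stmt15.pFun_gt_of_gAvg (hcont : Continuous fun q : ℝ × M => ψ q.1 q.2)
    (hg : Continuous g) (hg01 : ∀ x, g x ∈ Set.Icc (0 : ℝ) 1) {x : M}
    (h : ∀ n : ℕ, 1 ≤ n → 1 / 2 < gAvg ψ g n x) : 1 / 2 < pFun ψ g x := by
  have := Summable.tsum_lt_tsum (f := fun n : ℕ => ((1 / 2 : ℝ)) ^ (n + 1) * (1 / 2))
    (g := fun n : ℕ => ((1 / 2 : ℝ)) ^ (n + 1) * gAvg ψ g (n + 1) x) (i := 0)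
    (fun n => mul_le_mul_of_nonneg_left (h (n + 1) (by omega)).le (by positivity))
    (by
      have := h 1 le_rfl
      have hp : (0:ℝ) < (1/2 : ℝ) ^ (0 + 1) := by norm_num
      exact mul_lt_mul_of_pos_left this hp)
    stmt15.summable_halfgeo (stmt15.pFun_summable hcont hg hg01 x)
  rw [stmt15.tsum_halfgeo] at this
  exact this

/-- If all averages are `< 1/2` then `p < 1/2`. -/
lemma stmt15.pFun_lt_of_gAvg (hcont : Continuous fun q : ℝ × M => ψ q.1 q.2)
    (hg : Continuous g) (hg01 : ∀ x, g x ∈ Set.Icc (0 : ℝ) 1) {x : M}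
    (h : ∀ n : ℕ, 1 ≤ n → gAvg ψ g n x < 1 / 2) : pFun ψ g x < 1 / 2 := by
  have := Summable.tsum_lt_tsum (g := fun n : ℕ => ((1 / 2 : ℝ)) ^ (n + 1) * (1 / 2))
    (f := fun n : ℕ => ((1 / 2 : ℝ)) ^ (n + 1) * gAvg ψ g (n + 1) x) (i := 0)
    (fun n => mul_le_mul_of_nonneg_left (h (n + 1) (by omega)).le (by positivity))
    (by
      have := h 1 le_rfl
      have hp : (0:ℝ) < (1/2 : ℝ) ^ (0 + 1) := by norm_num
      exact mul_lt_mul_of_pos_left this hp)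
    (stmt15.pFun_summable hcont hg hg01 x) stmt15.summable_halfgeo
  rw [stmt15.tsum_halfgeo] at this
  exact this

/-- If `g = 1` on the orbit after some negative time `c`, then every average exceeds 1/2. -/
lemma stmt15.gAvg_gt_half (hcont : Continuous fun q : ℝ × M => ψ q.1 q.2) (hg : Continuous g)
    (hg01 : ∀ x, g x ∈ Set.Icc (0 : ℝ) 1) {x : M} {c : ℝ} (hc : c < 0)
    (h1 : ∀ t, c < t → g (ψ t x) = 1) {n : ℕ} (hn : 1 ≤ n) :
    1 / 2 < gAvg ψ g n x := by
  have hN : (1 : ℝ) ≤ (n : ℝ) := by exact_mod_cast hn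
  set N := (n : ℝ) with hNdef
  set a := max c (-N) with ha
  have hca : c ≤ a := le_max_left _ _
  have ha0 : a < 0 := max_lt hc (by linarith)
  have haN : -N ≤ a := le_max_right _ _
  have key1 : (∫ t in (a / 2)..N, g (ψ t x)) = N - a / 2 := by
    rw [intervalIntegral.integral_congr (g := fun _ => (1 : ℝ))
      (fun t ht => by
        rw [Set.uIcc_of_le (by linarith : a / 2 ≤ N)] at ht
        exact h1 t (by linarith [ht.1]))]
    simp [smul_eq_mul]
  have key2 : 0 ≤ ∫ t in (-N)..(a / 2), g (ψ t x) :=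
    intervalIntegral.integral_nonneg (by linarith) (fun t _ => (hg01 _).1)
  have hadd : (∫ t in (-N)..(a / 2), g (ψ t x)) + (∫ t in (a / 2)..N, g (ψ t x))
      = ∫ t in (-N)..N, g (ψ t x) :=
    intervalIntegral.integral_add_adjacent_intervals
      ((stmt15.orbitCont hcont hg x).intervalIntegrable _ _)
      ((stmt15.orbitCont hcont hg x).intervalIntegrable _ _)
  have hI : N < ∫ t in (-N)..N, g (ψ t x) := by
    rw [← hadd, key1]; linarith
  show 1 / 2 < (1 / (2 * N)) * ∫ t in (-N)..N, g (ψ t x)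
  have h2N : (0 : ℝ) < 1 / (2 * N) := by positivity
  calc (1 / 2 : ℝ) = (1 / (2 * N)) * N := by field_simp
    _ < (1 / (2 * N)) * ∫ t in (-N)..N, g (ψ t x) := mul_lt_mul_of_pos_left hI h2N

/-- If `g = 0` on the orbit before some positive time `c`, then every average is below 1/2. -/
lemma stmt15.gAvg_lt_half (hcont : Continuous fun q : ℝ × M => ψ q.1 q.2) (hg : Continuous g)
    (hg01 : ∀ x, g x ∈ Set.Icc (0 : ℝ) 1) {x : M} {c : ℝ} (hc : 0 < c)
    (h0 : ∀ t, t < c → g (ψ t x) = 0) {n : ℕ} (hn : 1 ≤ n) :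
    gAvg ψ g n x < 1 / 2 := by
  have hN : (1 : ℝ) ≤ (n : ℝ) := by exact_mod_cast hn
  set N := (n : ℝ) with hNdef
  set b := min c N with hb
  have hbc : b ≤ c := min_le_left _ _
  have hb0 : 0 < b := lt_min hc (by linarith)
  have hbN : b ≤ N := min_le_right _ _
  have key1 : (∫ t in (-N)..(b / 2), g (ψ t x)) = 0 := by
    rw [intervalIntegral.integral_congr (g := fun _ => (0 : ℝ))
      (fun t ht => by
        rw [Set.uIcc_of_le (by linarith : -N ≤ b / 2)] at ht
        exact h0 t (by linarith [ht.2]))]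
    simp
  have key2 : (∫ t in (b / 2)..N, g (ψ t x)) ≤ N - b / 2 := by
    have hconst : (∫ _ in (b / 2)..N, (1 : ℝ)) = N - b / 2 := by simp
    rw [← hconst]
    exact intervalIntegral.integral_mono_on (by linarith)
      ((stmt15.orbitCont hcont hg x).intervalIntegrable _ _) intervalIntegrable_const
      (fun t _ => (hg01 _).2)
  have hadd : (∫ t in (-N)..(b / 2), g (ψ t x)) + (∫ t in (b / 2)..N, g (ψ t x))
      = ∫ t in (-N)..N, g (ψ t x) :=
    intervalIntegral.integral_add_adjacent_intervals
      ((stmt15.orbitCont hcont hg x).intervalIntegrable _ _)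
      ((stmt15.orbitCont hcont hg x).intervalIntegrable _ _)
  have hI : (∫ t in (-N)..N, g (ψ t x)) < N := by
    rw [← hadd, key1]; linarith
  show (1 / (2 * N)) * (∫ t in (-N)..N, g (ψ t x)) < 1 / 2
  have h2N : (0 : ℝ) < 1 / (2 * N) := by positivity
  calc (1 / (2 * N)) * ∫ t in (-N)..N, g (ψ t x)
      < (1 / (2 * N)) * N := mul_lt_mul_of_pos_left hI h2N
    _ = 1 / 2 := by field_simp

/-- Any orbit value at distance more than `ℓ` from a "gate" time is 0 or 1. -/
lemma stmt15.gate_mem (hadd : ∀ s t x, ψ (s + t) x = ψ s (ψ t x))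
    (hgate : ∀ x, 0 < g x → g x < 1 → ∀ t : ℝ, ℓ < |t| → g (ψ t x) = 0 ∨ g (ψ t x) = 1)
    {x : M} {s : ℝ} (hs0 : 0 < g (ψ s x)) (hs1 : g (ψ s x) < 1)
    {t : ℝ} (ht : ℓ < |t - s|) : g (ψ t x) = 0 ∨ g (ψ t x) = 1 := by
  have h := hadd (t - s) s x
  rw [sub_add_cancel] at h
  rw [h]
  exact hgate _ hs0 hs1 _ ht

/-- The orbit profile of a point whose `g`-value at time `s` is strictly between 0 and 1:
`g` is constantly `i ∈ {0,1}` before `s - ℓ` and constantly `j ∈ {0,1}` after `s + ℓ`. -/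
lemma stmt15.profile (hcont : Continuous fun q : ℝ × M => ψ q.1 q.2)
    (hadd : ∀ s t x, ψ (s + t) x = ψ s (ψ t x)) (hg : Continuous g)
    (hℓ : 0 < ℓ)
    (hgate : ∀ x, 0 < g x → g x < 1 → ∀ t : ℝ, ℓ < |t| → g (ψ t x) = 0 ∨ g (ψ t x) = 1)
    {x : M} {s : ℝ} (hs0 : 0 < g (ψ s x)) (hs1 : g (ψ s x) < 1) :
    ∃ i j : ℝ, (i = 0 ∨ i = 1) ∧ (j = 0 ∨ j = 1) ∧
      (∀ t, t < s - ℓ → g (ψ t x) = i) ∧ (∀ t, s + ℓ < t → g (ψ t x) = j) := by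
  have hf := stmt15.orbitCont hcont hg x
  have hmemR : ∀ t, s + ℓ < t → g (ψ t x) = 0 ∨ g (ψ t x) = 1 := fun t ht =>
    stmt15.gate_mem hadd hgate hs0 hs1 (by rw [abs_of_pos (by linarith)]; linarith)
  have hmemL : ∀ t, t < s - ℓ → g (ψ t x) = 0 ∨ g (ψ t x) = 1 := fun t ht =>
    stmt15.gate_mem hadd hgate hs0 hs1 (by rw [abs_of_neg (by linarith)]; linarith)
  refine ⟨g (ψ (s - ℓ - 1) x), g (ψ (s + ℓ + 1) x),
    hmemL _ (by linarith), hmemR _ (by linarith), ?_, ?_⟩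
  · exact fun t ht => stmt15.const_left_of_01 hf hmemL t _ ht (by linarith)
  · exact fun t ht => stmt15.const_right_of_01 hf hmemR t _ ht (by linarith)

/-- Key characterization of `X_{0,1}` points on the level set `p = 1/2`. -/
lemma stmt15.key (hcont : Continuous fun q : ℝ × M => ψ q.1 q.2)
    (hadd : ∀ s t x, ψ (s + t) x = ψ s (ψ t x)) (hg : Continuous g)
    (hg01 : ∀ x, g x ∈ Set.Icc (0 : ℝ) 1) (hℓ : 0 < ℓ)
    (hgate : ∀ x, 0 < g x → g x < 1 → ∀ t : ℝ, ℓ < |t| → g (ψ t x) = 0 ∨ g (ψ t x) = 1)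
    (hℓ1 : ℓ < 1) {x : M} (hp : pFun ψ g x = 1 / 2) :
    (x ∈ Xset ψ g 0 1 → g (ψ (-2) x) = 0 ∧ g (ψ 2 x) = 1) ∧
    (g (ψ (-2) x) < 1 / 2 → 1 / 2 < g (ψ 2 x) →
      x ∈ Xset ψ g 0 1 ∧ g (ψ (-2) x) = 0 ∧ g (ψ 2 x) = 1) := by
  have hf := stmt15.orbitCont hcont hg x
  constructor
  · rintro ⟨hB, hT⟩
    obtain ⟨t₀, ht₀⟩ := (hB.eventually_lt_const (by norm_num : (0:ℝ) < 1/2)).exists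
    obtain ⟨t₁, ht₁⟩ := (hT.eventually_const_lt (by norm_num : (1/2:ℝ) < 1)).exists
    have hhalf : (1/2 : ℝ) ∈ Set.uIcc (g (ψ t₀ x)) (g (ψ t₁ x)) :=
      Set.mem_uIcc.2 (Or.inl ⟨ht₀.le, ht₁.le⟩)
    obtain ⟨s, _, hs⟩ := intermediate_value_uIcc (f := fun t => g (ψ t x)) (a := t₀) (b := t₁)
      hf.continuousOn hhalf
    have hs' : g (ψ s x) = 1 / 2 := hs
    obtain ⟨i, j, hi, hj, hL, hR⟩ := stmt15.profile hcont hadd hg hℓ hgate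
      (by rw [hs']; norm_num) (by rw [hs']; norm_num)
    have hi0 : i = 0 :=
      tendsto_nhds_unique (stmt15.tendsto_atBot_of_const (a := s - ℓ) hL) hB
    have hj1 : j = 1 :=
      tendsto_nhds_unique (stmt15.tendsto_atTop_of_const (a := s + ℓ) hR) hT
    subst hi0; subst hj1
    have claim1 : s + ℓ < 2 := by
      by_contra hcon
      push_neg at hcon
      have hc : (0:ℝ) < s - ℓ := by linarith
      have := stmt15.pFun_lt_of_gAvg hcont hg hg01
        (fun n hn => stmt15.gAvg_lt_half hcont hg hg01 hc hL hn)
      linarith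
    have claim2 : -2 < s - ℓ := by
      by_contra hcon
      push_neg at hcon
      have hc : s + ℓ < 0 := by linarith
      have := stmt15.pFun_gt_of_gAvg hcont hg hg01
        (fun n hn => stmt15.gAvg_gt_half hcont hg hg01 hc hR hn)
      linarith
    exact ⟨hL _ (by linarith), hR _ (by linarith)⟩
  · intro ha hb
    have h0 : g (ψ (-2) x) = 0 := by
      by_contra hne
      have h1' : 0 < g (ψ (-2) x) := lt_of_le_of_ne (hg01 _).1 (Ne.symm hne)
      obtain ⟨i, j, hi, hj, hL, hR⟩ := stmt15.profile hcont hadd hg hℓ hgate h1' (by linarith)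
      have h2R : g (ψ 2 x) = j := hR 2 (by linarith)
      have hj1 : j = 1 := by
        rcases hj with h | h
        · rw [h] at h2R; linarith
        · exact h
      have := stmt15.pFun_gt_of_gAvg hcont hg hg01
        (fun n hn => stmt15.gAvg_gt_half hcont hg hg01 (c := -2 + ℓ) (by linarith)
          (fun t ht => (hR t ht).trans hj1) hn)
      linarith
    have h1 : g (ψ 2 x) = 1 := by
      by_contra hne
      have hlt : g (ψ 2 x) < 1 := lt_of_le_of_ne (hg01 _).2 hne
      obtain ⟨i, j, hi, hj, hL, hR⟩ := stmt15.profile hcont hadd hg hℓ hgate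
        (show 0 < g (ψ 2 x) by linarith) hlt
      have h2L : g (ψ (-2) x) = i := hL (-2) (by linarith)
      have hi0 : i = 0 := by rw [← h2L, h0]
      have := stmt15.pFun_lt_of_gAvg hcont hg hg01
        (fun n hn => stmt15.gAvg_lt_half hcont hg hg01 (c := 2 - ℓ) (by linarith)
          (fun t ht => (hL t ht).trans hi0) hn)
      linarith
    have hhalf : (1/2 : ℝ) ∈ Set.uIcc (g (ψ (-2) x)) (g (ψ 2 x)) := by
      rw [h0, h1, Set.mem_uIcc]; norm_num
    obtain ⟨s, _, hs⟩ := intermediate_value_uIcc (f := fun t => g (ψ t x))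
      (a := (-2:ℝ)) (b := 2) hf.continuousOn hhalf
    have hs' : g (ψ s x) = 1 / 2 := hs
    obtain ⟨i, j, hi, hj, hL, hR⟩ := stmt15.profile hcont hadd hg hℓ hgate
      (by rw [hs']; norm_num) (by rw [hs']; norm_num)
    have hj1 : j = 1 := by
      rcases hj with hj0 | hj1
      · exfalso
        by_cases hcase : s + ℓ < 2
        · have := hR 2 hcase
          rw [h1, hj0] at this; norm_num at this
        · push_neg at hcase
          rcases hi with hi0 | hi1
          · have hc : (0:ℝ) < s - ℓ := by linarith
            have := stmt15.pFun_lt_of_gAvg hcont hg hg01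
              (fun n hn => stmt15.gAvg_lt_half hcont hg hg01 hc
                (fun t ht => (hL t ht).trans hi0) hn)
            linarith
          · have := hL (-2) (by linarith)
            rw [h0, hi1] at this; norm_num at this
      · exact hj1
    have hi0 : i = 0 := by
      rcases hi with hi0 | hi1
      · exact hi0
      · exfalso
        by_cases hcase : -2 < s - ℓ
        · have := hL (-2) hcase
          rw [h0, hi1] at this; norm_num at this
        · push_neg at hcase
          have hc : s + ℓ < 0 := by linarith
          have := stmt15.pFun_gt_of_gAvg hcont hg hg01
            (fun n hn => stmt15.gAvg_gt_half hcont hg hg01 hc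
              (fun t ht => (hR t ht).trans hj1) hn)
          linarith
    refine ⟨⟨?_, ?_⟩, h0, h1⟩
    · exact stmt15.tendsto_atBot_of_const (a := s - ℓ) (fun t ht => (hL t ht).trans hi0)
    · exact stmt15.tendsto_atTop_of_const (a := s + ℓ) (fun t ht => (hR t ht).trans hj1)

end AuxStmt15

/-- assume `ℓ < 1` and `M` compact.  Then
`X_{0,1} ∩ p⁻¹(1/2)` is closed (indeed clopen) in the subspace topology of
`p⁻¹(1/2)`, and is a compact subset of `M`. -/
theorem stmt_15
    {M : Type*} [TopologicalSpace M] (ψ : ℝ → M → M)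
    (hcont : Continuous fun q : ℝ × M => ψ q.1 q.2)
    (hzero : ∀ x, ψ 0 x = x)
    (hadd : ∀ s t x, ψ (s + t) x = ψ s (ψ t x))
    (g : M → ℝ) (hg : Continuous g) (hg01 : ∀ x, g x ∈ Set.Icc (0 : ℝ) 1)
    (ℓ : ℝ) (hℓ : 0 < ℓ)
    (hgate : ∀ x, 0 < g x → g x < 1 → ∀ t : ℝ, ℓ < |t| →
      g (ψ t x) = 0 ∨ g (ψ t x) = 1)
    (hℓ1 : ℓ < 1) (hM : CompactSpace M) :
    IsClosed {y : pFun ψ g ⁻¹' {(1 / 2 : ℝ)} | (y : M) ∈ Xset ψ g 0 1} ∧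
    IsOpen {y : pFun ψ g ⁻¹' {(1 / 2 : ℝ)} | (y : M) ∈ Xset ψ g 0 1} ∧
    IsCompact (Xset ψ g 0 1 ∩ pFun ψ g ⁻¹' {(1 / 2 : ℝ)}) := by
  have hψm2 : Continuous fun y : M => g (ψ (-2) y) :=
    hg.comp (hcont.comp (continuous_const.prodMk continuous_id))
  have hψ2 : Continuous fun y : M => g (ψ 2 y) :=
    hg.comp (hcont.comp (continuous_const.prodMk continuous_id))
  -- continuity of `pFun`
  have hpc : Continuous (pFun ψ g) := by
    have huncurry : Continuous (Function.uncurry fun (x : M) (t : ℝ) => g (ψ t x)) :=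
      hg.comp (hcont.comp (continuous_snd.prodMk continuous_fst))
    have hgA : ∀ n : ℕ, Continuous fun x => gAvg ψ g n x := by
      intro n
      unfold gAvg
      exact continuous_const.mul
        (intervalIntegral.continuous_parametric_intervalIntegral_of_continuous' huncurry _ _)
    have : Continuous fun x : M => ∑' n : ℕ, (1/2:ℝ)^(n+1) * gAvg ψ g (n+1) x := by
      apply continuous_tsum (u := fun n : ℕ => (1/2:ℝ)^(n+1))
      · exact fun n => continuous_const.mul (hgA (n+1))
      · simpa [pow_succ] using summable_geometric_two.mul_right (1/2:ℝ)
      · intro n x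
        have h := stmt15.gAvg_mem hcont hg hg01 (n := n+1) (by omega) x
        have h1 : ‖gAvg ψ g (n+1) x‖ ≤ 1 := by
          rw [Real.norm_eq_abs, abs_le]
          exact ⟨by linarith [h.1], h.2⟩
        calc ‖(1/2:ℝ)^(n+1) * gAvg ψ g (n+1) x‖
            = (1/2:ℝ)^(n+1) * ‖gAvg ψ g (n+1) x‖ := by
              rw [norm_mul, Real.norm_eq_abs ((1/2:ℝ)^(n+1)), abs_of_pos (by positivity)]
          _ ≤ (1/2:ℝ)^(n+1) * 1 :=
              mul_le_mul_of_nonneg_left h1 (by positivity)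
          _ = (1/2:ℝ)^(n+1) := mul_one _
    exact this
  have hkey := fun (x : M) (hp : pFun ψ g x = 1/2) =>
    stmt15.key hcont hadd hg hg01 hℓ hgate hℓ1 hp
  refine ⟨?_, ?_, ?_⟩
  · -- closed
    have e1 : {y : pFun ψ g ⁻¹' {(1 / 2 : ℝ)} | (y : M) ∈ Xset ψ g 0 1}
        = Subtype.val ⁻¹' {x : M | g (ψ (-2) x) = 0 ∧ g (ψ 2 x) = 1} := by
      ext y
      have hp : pFun ψ g y.1 = 1/2 := y.2
      simp only [Set.mem_setOf_eq, Set.mem_preimage]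
      constructor
      · exact (hkey y.1 hp).1
      · rintro ⟨hA, hB⟩
        exact ((hkey y.1 hp).2 (by rw [hA]; norm_num) (by rw [hB]; norm_num)).1
    rw [e1]
    apply IsClosed.preimage continuous_subtype_val
    have : {x : M | g (ψ (-2) x) = 0 ∧ g (ψ 2 x) = 1}
        = (fun y : M => g (ψ (-2) y)) ⁻¹' {0} ∩ (fun y : M => g (ψ 2 y)) ⁻¹' {1} := rfl
    rw [this]
    exact (isClosed_singleton.preimage hψm2).inter (isClosed_singleton.preimage hψ2)
  · -- open
    have e2 : {y : pFun ψ g ⁻¹' {(1 / 2 : ℝ)} | (y : M) ∈ Xset ψ g 0 1}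
        = Subtype.val ⁻¹' {x : M | g (ψ (-2) x) < 1/2 ∧ 1/2 < g (ψ 2 x)} := by
      ext y
      have hp : pFun ψ g y.1 = 1/2 := y.2
      simp only [Set.mem_setOf_eq, Set.mem_preimage]
      constructor
      · intro hx
        obtain ⟨hA, hB⟩ := (hkey y.1 hp).1 hx
        constructor
        · rw [hA]; norm_num
        · rw [hB]; norm_num
      · rintro ⟨hA, hB⟩
        exact ((hkey y.1 hp).2 hA hB).1
    rw [e2]
    apply IsOpen.preimage continuous_subtype_val
    rw [Set.setOf_and]
    exact (isOpen_lt hψm2 continuous_const).inter (isOpen_lt continuous_const hψ2)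
  · -- compact
    have e3 : Xset ψ g 0 1 ∩ pFun ψ g ⁻¹' {(1 / 2 : ℝ)}
        = pFun ψ g ⁻¹' {(1 / 2 : ℝ)} ∩ {x : M | g (ψ (-2) x) = 0 ∧ g (ψ 2 x) = 1} := by
      ext x
      simp only [Set.mem_inter_iff, Set.mem_preimage, Set.mem_singleton_iff, Set.mem_setOf_eq]
      constructor
      · rintro ⟨hx, hp⟩
        exact ⟨hp, (hkey x hp).1 hx⟩
      · rintro ⟨hp, hA, hB⟩
        exact ⟨((hkey x hp).2 (by rw [hA]; norm_num) (by rw [hB]; norm_num)).1, hp⟩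
    rw [e3]
    apply IsClosed.isCompact
    refine (isClosed_singleton.preimage hpc).inter ?_
    have : {x : M | g (ψ (-2) x) = 0 ∧ g (ψ 2 x) = 1}
        = (fun y : M => g (ψ (-2) y)) ⁻¹' {0} ∩ (fun y : M => g (ψ 2 y)) ⁻¹' {1} := rfl
    rw [this]
    exact (isClosed_singleton.preimage hψm2).inter (isClosed_singleton.preimage hψ2)
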